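/- Let Q₁,…,Q_N satisfy ∑ᵢ QᵢᵀQᵢ = I and π > 0. Suppose t is a unit vector lying in the kernel of exactly P of the Qⱼ and is a right singular vector of each of the remaining N−P matrices Qᵢ with identical singular values. Then tᵀ T_π t = (P(1 − πN) + πN²)/(πN(1 + π(N−P))). -/

import Mathlib

open Matrix BigOperators

private lemma sum_mulVec_aux {ι n : Type*} [Fintype n] [DecidableEq n] (s : Finset ι)
    (M : ι → Matrix n n ℝ) (v : n → ℝ) :
    (∑ i ∈ s, M i) *ᵥ v = ∑ i ∈ s, M i *ᵥ v := by
  classical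
  induction s using Finset.induction_on with
  | empty => simp [Matrix.zero_mulVec]
  | @insert a s h ih =>
    rw [Finset.sum_insert h, Finset.sum_insert h, Matrix.add_mulVec, ih]

theorem stmt10 {N n : ℕ} {m : Fin N → ℕ}
    (Q : ∀ i, Matrix (Fin (m i)) (Fin n) ℝ)
    (hQ : ∑ i, (Q i)ᵀ * Q i = 1)
    (p : ℝ) (hp : 0 < p)
    (T : Matrix (Fin n) (Fin n) ℝ)
    (hT : T = (N : ℝ)⁻¹ •
      ∑ i, ((Q i)ᵀ * Q i + p • (1 : Matrix (Fin n) (Fin n) ℝ))⁻¹)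
    (t : Fin n → ℝ) (ht : ∑ j, t j ^ 2 = 1)
    (J : Finset (Fin N)) (P : ℕ) (hJ : J.card = P) (hPN : P < N)
    (hker : ∀ j ∈ J, Q j *ᵥ t = 0)
    (σ2 : ℝ) (hσ : ∀ i ∉ J, ((Q i)ᵀ * Q i) *ᵥ t = σ2 • t) :
    t ⬝ᵥ (T *ᵥ t) =
      ((P : ℝ) * (1 - p * N) + p * (N : ℝ) ^ 2) /
        (p * N * (1 + p * ((N : ℝ) - P))) := by
  -- t is nonzero
  have htt : t ⬝ᵥ t = 1 := by
    simpa [dotProduct, sq] using ht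
  have htne : t ≠ 0 := by
    intro h
    rw [h] at htt
    simp at htt
  -- action of QᵀQ on t for i ∈ J
  have hkerQQ : ∀ j ∈ J, ((Q j)ᵀ * Q j) *ᵥ t = 0 := by
    intro j hj
    rw [← mulVec_mulVec, hker j hj, mulVec_zero]
  -- each A i := QᵀQ + pI is positive definite
  set A : Fin N → Matrix (Fin n) (Fin n) ℝ :=
    fun i => (Q i)ᵀ * Q i + p • (1 : Matrix (Fin n) (Fin n) ℝ) with hA
  have hApd : ∀ i, (A i).PosDef := by
    intro i
    have h1 : ((Q i)ᵀ * Q i).PosSemidef := by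
      have := Matrix.posSemidef_conjTranspose_mul_self (Q i)
      simpa [Matrix.conjTranspose_eq_transpose_of_trivial] using this
    have h2 : (p • (1 : Matrix (Fin n) (Fin n) ℝ)).PosDef := by
      rw [Matrix.smul_one_eq_diagonal]
      exact Matrix.PosDef.diagonal fun _ => hp
    exact Matrix.PosDef.posSemidef_add h1 h2
  -- generic eigenvector inversion lemma
  have hinv : ∀ (i : Fin N) (c : ℝ), 0 < c → A i *ᵥ t = c • t →
      (A i)⁻¹ *ᵥ t = c⁻¹ • t := by
    intro i c hc hAt
    have hu := (hApd i).isUnit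
    have h1 : (A i)⁻¹ *ᵥ (A i *ᵥ t) = t := by
      rw [mulVec_mulVec, Matrix.nonsing_inv_mul _ ((Matrix.isUnit_iff_isUnit_det _).mp hu),
        one_mulVec]
    rw [hAt, mulVec_smul] at h1
    calc (A i)⁻¹ *ᵥ t = c⁻¹ • (c • ((A i)⁻¹ *ᵥ t)) := by
          rw [smul_smul, inv_mul_cancel₀ hc.ne', one_smul]
      _ = c⁻¹ • t := by rw [h1]
  -- eigenvalue facts
  have hAJ : ∀ j ∈ J, (A j)⁻¹ *ᵥ t = p⁻¹ • t := by
    intro j hj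
    refine hinv j p hp ?_
    rw [hA]
    simp [Matrix.add_mulVec, hkerQQ j hj, Matrix.smul_mulVec]
  have hσnn : ∀ i ∉ J, 0 ≤ σ2 := by
    intro i hi
    have h0 := (Matrix.posSemidef_conjTranspose_mul_self (Q i)).dotProduct_mulVec_nonneg t
    have h2 : ((Q i)ᴴ * Q i) *ᵥ t = σ2 • t := by
      simpa [Matrix.conjTranspose_eq_transpose_of_trivial] using hσ i hi
    rw [h2] at h0
    simp only [dotProduct_smul, smul_eq_mul, star_trivial] at h0
    rw [htt, mul_one] at h0
    exact h0
  have hAJc : ∀ i ∉ J, (A i)⁻¹ *ᵥ t = (σ2 + p)⁻¹ • t := by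
    intro i hi
    refine hinv i (σ2 + p) (by have := hσnn i hi; linarith) ?_
    rw [hA]
    simp [Matrix.add_mulVec, hσ i hi, Matrix.smul_mulVec, add_smul]
  have hcard : ((Jᶜ.card : ℕ) : ℝ) = (N : ℝ) - P := by
    rw [Finset.card_compl, hJ, Fintype.card_fin, Nat.cast_sub hPN.le]
  -- determine σ2 : (N - P) * σ2 = 1
  have hσ2 : ((N : ℝ) - P) * σ2 = 1 := by
    have hsum : (∑ i, ((Q i)ᵀ * Q i) *ᵥ t) = t := by
      have := congrArg (fun M => M *ᵥ t) hQ
      simpa [sum_mulVec_aux] using this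
    rw [← Finset.sum_add_sum_compl J] at hsum
    have h1 : ∑ j ∈ J, ((Q j)ᵀ * Q j) *ᵥ t = 0 := by
      apply Finset.sum_eq_zero
      intro j hj; exact hkerQQ j hj
    have h2 : ∑ i ∈ Jᶜ, ((Q i)ᵀ * Q i) *ᵥ t = (((N : ℝ) - P) * σ2) • t := by
      rw [Finset.sum_congr rfl (fun i hi => hσ i (Finset.mem_compl.mp hi)),
        Finset.sum_const, mul_smul, ← hcard, Nat.cast_smul_eq_nsmul]
    rw [h1, h2, zero_add] at hsum
    obtain ⟨j, hj⟩ := Function.ne_iff.mp htne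
    have hcf := congrFun hsum j
    simp only [Pi.smul_apply, smul_eq_mul] at hcf
    have hj' : t j ≠ 0 := by simpa using hj
    have : (((N : ℝ) - P) * σ2) * t j = 1 * t j := by rw [one_mul]; exact hcf
    exact mul_right_cancel₀ hj' this
  -- compute t ⬝ᵥ T *ᵥ t
  have hTt : t ⬝ᵥ (T *ᵥ t) =
      (N : ℝ)⁻¹ * ((P : ℝ) * p⁻¹ + ((N : ℝ) - P) * (σ2 + p)⁻¹) := by
    rw [hT, Matrix.smul_mulVec, sum_mulVec_aux, ← Finset.sum_add_sum_compl J]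
    have h1 : ∑ j ∈ J, (A j)⁻¹ *ᵥ t = ((P : ℝ) * p⁻¹) • t := by
      rw [Finset.sum_congr rfl (fun j hj => hAJ j hj), Finset.sum_const, hJ,
        mul_smul, Nat.cast_smul_eq_nsmul]
    have h2 : ∑ i ∈ Jᶜ, (A i)⁻¹ *ᵥ t = (((N : ℝ) - P) * (σ2 + p)⁻¹) • t := by
      rw [Finset.sum_congr rfl (fun i hi => hAJc i (Finset.mem_compl.mp hi)),
        Finset.sum_const, mul_smul, ← hcard, Nat.cast_smul_eq_nsmul]
    rw [h1, h2, ← add_smul, dotProduct_smul, smul_eq_mul, dotProduct_smul, smul_eq_mul,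
      htt, mul_one]
  rw [hTt]
  -- final algebra
  have hNpos : (0 : ℝ) < N := by
    have : 0 < N := Nat.zero_lt_of_lt hPN
    exact_mod_cast this
  have hNP : (0 : ℝ) < (N : ℝ) - P := by
    have : (P : ℝ) < N := by exact_mod_cast hPN
    linarith
  have hden : 0 < 1 + p * ((N : ℝ) - P) := by
    have := mul_pos hp hNP; linarith
  have hσval : σ2 = ((N : ℝ) - P)⁻¹ := by
    field_simp
    linarith [hσ2]
  rw [hσval]
  have h1 : (((N : ℝ) - P)⁻¹ + p) ≠ 0 := by
    have : 0 < ((N : ℝ) - P)⁻¹ := inv_pos.mpr hNP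
    linarith
  field_simp
  ring
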